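/- Let ρ : G → Aut(M) be a representation of a finite group G on a free ℤ-module M, let H ≤ M ⋊_ρ G be a subgroup with H ∩ M = |G|·M and projecting onto G, and for each h ∈ G fix v_h ∈ M with (v_h, h) ∈ H. Then (v₁, g) and (v₂, g) are conjugate in H if and only if there exists h ∈ C(g) (the centralizer of g in G) such that v₁ − ρ(h)v₂ − (v_h − ρ(g)v_h) ∈ |G|·W_g(M), where W_g(M) = Im(id_M − ρ(g)). -/

import Mathlib

/-- The multiplicative group structure on `AddAut M` (composition), as in the older Mathlib,
where `AddAut M` was a `Group`; current Mathlib makes it an `AddGroup` instead. -/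
instance addAutMulGroupOld (M : Type*) [Add M] : Group (AddAut M) where
  mul g h := AddEquiv.trans h g
  one := AddEquiv.refl _
  inv := AddEquiv.symm
  mul_assoc _ _ _ := rfl
  one_mul _ := rfl
  mul_one _ := rfl
  inv_mul_cancel := AddEquiv.self_trans_symm

/-- An additive automorphism of `M` seen as a multiplicative automorphism of
`Multiplicative M`, as a monoid homomorphism. -/
def addAutToMulAut (M : Type*) [AddCommGroup M] : AddAut M →* MulAut (Multiplicative M) where
  toFun f := AddEquiv.toMultiplicative f
  map_one' := rfl
  map_mul' _ _ := rfl

lemma addAutToMulAut_apply {M : Type*} [AddCommGroup M] (f : AddAut M) (x : Multiplicative M) :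
    (addAutToMulAut M f) x = Multiplicative.ofAdd (f (Multiplicative.toAdd x)) := rfl

lemma addAutToMulAut_inv_apply {M : Type*} [AddCommGroup M] (f : AddAut M)
    (x : Multiplicative M) :
    ((addAutToMulAut M) f)⁻¹ x = Multiplicative.ofAdd (f⁻¹ (Multiplicative.toAdd x)) := by
  rw [← map_inv (addAutToMulAut M) f]; rfl

/-- Lemma 3.4: with `H ≤ M ⋊_ρ G` an extension of `|G|·M` by `G` and chosen elements
`(v_h, h) ∈ H`, the elements `(v₁, g)` and `(v₂, g)` of `H` are conjugate in `H` if and only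
if there is `h ∈ C(g)` with `v₁ − ρ(h)v₂ − (v_h − ρ(g)v_h) ∈ |G|·W_g(M)`, where
`W_g(M) = Im(id − ρ(g))`. -/
theorem stmt11 (G : Type*) [Group G] [Fintype G]
    (M : Type*) [AddCommGroup M] [Module.Free ℤ M]
    (ρ : G →* AddAut M)
    (H : Subgroup (SemidirectProduct (Multiplicative M) G ((addAutToMulAut M).comp ρ)))
    (hinter : ∀ x : M, SemidirectProduct.inl (Multiplicative.ofAdd x) ∈ H ↔
      ∃ y : M, (Fintype.card G) • y = x)
    (hsurj : ∀ g : G, ∃ x ∈ H, SemidirectProduct.rightHom x = g)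
    (vh : G → M)
    (hvh : ∀ h : G,
      SemidirectProduct.inl (Multiplicative.ofAdd (vh h)) * SemidirectProduct.inr h ∈ H)
    (g : G) (v₁ v₂ : M)
    (h₁ : SemidirectProduct.inl (Multiplicative.ofAdd v₁) * SemidirectProduct.inr g ∈ H)
    (h₂ : SemidirectProduct.inl (Multiplicative.ofAdd v₂) * SemidirectProduct.inr g ∈ H) :
    (∃ x ∈ H, x * (SemidirectProduct.inl (Multiplicative.ofAdd v₂) *
        SemidirectProduct.inr g) * x⁻¹ =
      SemidirectProduct.inl (Multiplicative.ofAdd v₁) * SemidirectProduct.inr g)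
    ↔ ∃ h : G, h * g = g * h ∧ ∃ w : M,
        v₁ - ρ h v₂ - (vh h - ρ g (vh h)) = (Fintype.card G) • (w - ρ g w) := by
  constructor
  · rintro ⟨⟨u', h⟩, hxH, hconj⟩
    set u := Multiplicative.toAdd u' with hu
    have hu' : u' = Multiplicative.ofAdd u := rfl
    have hr := congrArg SemidirectProduct.rightHom hconj
    simp [SemidirectProduct.rightHom] at hr
    have hcomm : h * g = g * h := mul_inv_eq_iff_eq_mul.mp hr
    have hl := congrArg Multiplicative.toAdd (congrArg SemidirectProduct.left hconj)
    simp [hu', SemidirectProduct.mul_left, SemidirectProduct.inv_left,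
      addAutToMulAut_apply, addAutToMulAut_inv_apply] at hl
    have hcomp : ρ h (ρ g ((ρ h)⁻¹ u)) = ρ g u := by
      have h2 : ρ (h * g * h⁻¹) u = ρ g u := by rw [hr]
      simp only [map_mul, map_inv] at h2; exact h2
    rw [show Multiplicative.toAdd ((MulEquiv.symm ((addAutToMulAut M) (ρ h))) (Multiplicative.ofAdd u)) = (ρ h)⁻¹ u from rfl, hcomp] at hl
    have heq : (⟨u', h⟩ : SemidirectProduct (Multiplicative M) G ((addAutToMulAut M).comp ρ)) *
        (SemidirectProduct.inl (Multiplicative.ofAdd (vh h)) * SemidirectProduct.inr h)⁻¹ =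
        SemidirectProduct.inl (Multiplicative.ofAdd (u - vh h)) := by
      ext
      · simp [hu', addAutToMulAut_apply, addAutToMulAut_inv_apply, sub_eq_add_neg,
          AddAut.apply_inv_self]
      · simp [div_eq_mul_inv]
    have hmem : SemidirectProduct.inl (φ := (addAutToMulAut M).comp ρ)
        (Multiplicative.ofAdd (u - vh h)) ∈ H := heq ▸ mul_mem hxH (inv_mem (hvh h))
    obtain ⟨y, hy⟩ := (hinter _).1 hmem
    refine ⟨h, hcomm, y, ?_⟩
    have hgy : (Fintype.card G) • (ρ g y) = ρ g (u - vh h) := by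
      rw [← map_nsmul, hy]
    rw [smul_sub, hy, hgy, map_sub, ← hl]
    abel
  · rintro ⟨h, hcomm, w, hw⟩
    set u : M := Fintype.card G • w + vh h with hudef
    have hrgh : h * g * h⁻¹ = g := mul_inv_eq_iff_eq_mul.mpr hcomm
    refine ⟨⟨Multiplicative.ofAdd u, h⟩, ?_, ?_⟩
    · have heq : (⟨Multiplicative.ofAdd u, h⟩ :
          SemidirectProduct (Multiplicative M) G ((addAutToMulAut M).comp ρ)) =
          SemidirectProduct.inl (Multiplicative.ofAdd (Fintype.card G • w)) *
            (SemidirectProduct.inl (Multiplicative.ofAdd (vh h)) * SemidirectProduct.inr h) := by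
        ext
        · simp only [hudef, SemidirectProduct.mul_left, SemidirectProduct.left_inl,
            SemidirectProduct.right_inl, map_one, MulAut.one_apply, SemidirectProduct.left_inr,
            mul_one, ← ofAdd_add]
        · simp only [SemidirectProduct.mul_right, SemidirectProduct.right_inl,
            SemidirectProduct.right_inr, one_mul]
      rw [heq]
      exact mul_mem ((hinter _).2 ⟨w, rfl⟩) (hvh h)
    · have hcomp : ρ h (ρ g ((ρ h)⁻¹ u)) = ρ g u := by
        have h2 : ρ (h * g * h⁻¹) u = ρ g u := by rw [hrgh]
        simp only [map_mul, map_inv] at h2; exact h2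
      have hv : u + ρ h v₂ - ρ g u = v₁ := by
        rw [sub_sub, sub_eq_iff_eq_add] at hw
        rw [hw, hudef, map_add, map_nsmul, smul_sub]
        abel
      ext
      · simp only [SemidirectProduct.mul_left, SemidirectProduct.inv_left,
          SemidirectProduct.mul_right, SemidirectProduct.inv_right,
          SemidirectProduct.left_inl, SemidirectProduct.left_inr,
          SemidirectProduct.right_inl, SemidirectProduct.right_inr,
          MonoidHom.comp_apply, addAutToMulAut_apply, addAutToMulAut_inv_apply]
        simp only [map_mul, MulEquiv.coe_mk, addAutToMulAut_apply]
        rw [← hv]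
        simp [addAutToMulAut_apply, addAutToMulAut_inv_apply, hcomp, map_mul,
          sub_eq_add_neg]
        exact hcomp
      · simpa using hrgh
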